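/- Let P and Q be probability measures on a measurable space (Ω, 𝓕) with P absolutely continuous with respect to Q, let 𝓖 be a sub-σ-algebra of 𝓕, and let X : Ω → ℝ be integrable with respect to P. Then the Bayes formula holds: P-almost everywhere, the conditional expectation E_P[X | 𝓖] equals E_Q[X · (dP/dQ) | 𝓖] / E_Q[(dP/dQ) | 𝓖], where dP/dQ denotes the Radon–Nikodym derivative of P with respect to Q; in particular E_Q[(dP/dQ) | 𝓖] > 0 holds P-almost everywhere, so the quotient is well defined P-a.e. -/

import Mathlib

open MeasureTheory

private lemma bayes_aux
    {Ω : Type*} (G : MeasurableSpace Ω) {F : MeasurableSpace Ω} (P Q : Measure Ω)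
    [IsProbabilityMeasure P] [IsProbabilityMeasure Q]
    (hPQ : P ≪ Q) (hG : G ≤ F)
    (X : Ω → ℝ) (hX : Integrable X P) :
    (∀ᵐ ω ∂P, 0 < (Q[fun ω' => (P.rnDeriv Q ω').toReal | G]) ω) ∧
    (∀ᵐ ω ∂P, (P[X | G]) ω =
      (Q[fun ω' => X ω' * (P.rnDeriv Q ω').toReal | G]) ω /
      (Q[fun ω' => (P.rnDeriv Q ω').toReal | G]) ω) := by
  have hQtrim : SigmaFinite (Q.trim hG) := by
    have : IsFiniteMeasure (Q.trim hG) := isFiniteMeasure_trim hG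
    infer_instance
  have hPtrim : SigmaFinite (P.trim hG) := by
    have : IsFiniteMeasure (P.trim hG) := isFiniteMeasure_trim hG
    infer_instance
  set Z : Ω → ℝ := fun ω => (P.rnDeriv Q ω).toReal with hZdef
  have hZ_int : Integrable Z Q := Measure.integrable_toReal_rnDeriv
  set g : Ω → ℝ := Q[Z | G] with hgdef
  have hgm : StronglyMeasurable[G] g := stronglyMeasurable_condExp
  -- positivity
  have hpos : ∀ᵐ ω ∂P, 0 < g ω := by
    set s : Set Ω := {ω | g ω ≤ 0} with hsdef
    have hs : MeasurableSet[G] s := hgm.measurable measurableSet_Iic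
    have h1 : ∫ ω in s, g ω ∂Q = ∫ ω in s, Z ω ∂Q := setIntegral_condExp hG hZ_int hs
    have h2 : ∫ ω in s, Z ω ∂Q = (P s).toReal :=
      Measure.setIntegral_toReal_rnDeriv hPQ s
    have h3 : ∫ ω in s, g ω ∂Q ≤ 0 :=
      setIntegral_nonpos (hG s hs) fun ω hω => hω
    have hPs : P s = 0 := by
      have : (P s).toReal ≤ 0 := by rw [← h2, ← h1]; exact h3
      have h0 : (P s).toReal = 0 := le_antisymm this ENNReal.toReal_nonneg
      exact (ENNReal.toReal_eq_zero_iff _).mp h0 |>.resolve_right (measure_ne_top P s)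
    rw [ae_iff]
    convert hPs using 2
    ext ω
    simp [hsdef, not_lt]
  refine ⟨hpos, ?_⟩
  -- main identity
  set Y : Ω → ℝ := P[X | G] with hYdef
  have hYm : StronglyMeasurable[G] Y := stronglyMeasurable_condExp
  have hY_int : Integrable Y P := integrable_condExp
  have hYZ_int : Integrable (Y * Z) Q := by
    have := (integrable_rnDeriv_smul_iff hPQ).mpr hY_int
    refine this.congr (Filter.Eventually.of_forall fun ω => ?_)
    simp [hZdef, mul_comm, smul_eq_mul]
  have hXZ_int : Integrable (fun ω => X ω * Z ω) Q := by
    have := (integrable_rnDeriv_smul_iff hPQ).mpr hX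
    refine this.congr (Filter.Eventually.of_forall fun ω => ?_)
    simp [hZdef, mul_comm, smul_eq_mul]
  have key : Q[Y * Z | G] =ᵐ[Q] Y * g :=
    condExp_mul_of_stronglyMeasurable_left hYm hYZ_int hZ_int
  have hYg_int : Integrable (Y * g) Q := integrable_condExp.congr key
  have key2 : Y * g =ᵐ[Q] Q[fun ω => X ω * Z ω | G] := by
    refine ae_eq_condExp_of_forall_setIntegral_eq hG hXZ_int
      (fun s hs _ => hYg_int.integrableOn) (fun s hs _ => ?_)
      ((hYm.mul stronglyMeasurable_condExp).aestronglyMeasurable)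
    have e1 : ∫ ω in s, (Y * g) ω ∂Q = ∫ ω in s, (Q[Y * Z | G]) ω ∂Q :=
      setIntegral_congr_ae (hG s hs) (key.mono fun ω h _ => h.symm)
    have e2 : ∫ ω in s, (Q[Y * Z | G]) ω ∂Q = ∫ ω in s, (Y * Z) ω ∂Q :=
      setIntegral_condExp hG hYZ_int hs
    have e3 : ∫ ω in s, (Y * Z) ω ∂Q = ∫ ω in s, Y ω ∂P := by
      rw [← setIntegral_rnDeriv_smul hPQ (hG s hs)]
      refine setIntegral_congr_ae (hG s hs) (Filter.Eventually.of_forall fun ω _ => ?_)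
      simp [hZdef, mul_comm, smul_eq_mul]
    have e4 : ∫ ω in s, Y ω ∂P = ∫ ω in s, X ω ∂P := setIntegral_condExp hG hX hs
    have e5 : ∫ ω in s, X ω ∂P = ∫ ω in s, X ω * Z ω ∂Q := by
      rw [← setIntegral_rnDeriv_smul hPQ (hG s hs)]
      refine setIntegral_congr_ae (hG s hs) (Filter.Eventually.of_forall fun ω _ => ?_)
      simp [hZdef, mul_comm, smul_eq_mul]
    rw [e1, e2, e3, e4, e5]
  have keyP : ∀ᵐ ω ∂P, Y ω * g ω = (Q[fun ω => X ω * Z ω | G]) ω := hPQ.ae_eq key2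
  filter_upwards [hpos, keyP] with ω h1 h2
  rw [eq_div_iff h1.ne']
  exact h2

/-- **Bayes formula for conditional expectations.** If `P ≪ Q` are probability measures on
`(Ω, 𝓕)`, `𝓖 ≤ 𝓕` is a sub-σ-algebra, and `X` is `P`-integrable, then `P`-a.e.
`E_Q[dP/dQ | 𝓖] > 0` and `E_P[X | 𝓖] = E_Q[X · dP/dQ | 𝓖] / E_Q[dP/dQ | 𝓖]`. -/
theorem bayes_formula_conditional_expectation
    {Ω : Type*} {F : MeasurableSpace Ω} (P Q : Measure Ω)
    [IsProbabilityMeasure P] [IsProbabilityMeasure Q]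
    (hPQ : P ≪ Q) (G : MeasurableSpace Ω) (hG : G ≤ F)
    (X : Ω → ℝ) (hX : Integrable X P) :
    (∀ᵐ ω ∂P, 0 < (Q[fun ω' => (P.rnDeriv Q ω').toReal | G]) ω) ∧
    (∀ᵐ ω ∂P, (P[X | G]) ω =
      (Q[fun ω' => X ω' * (P.rnDeriv Q ω').toReal | G]) ω /
      (Q[fun ω' => (P.rnDeriv Q ω').toReal | G]) ω) :=
  bayes_aux G P Q hPQ hG X hX
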